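/- Let r₁, r₂ > 0 and ω₁ > 0, ω₂ ∈ ℝ with ω₂ ≠ 0 and ω₂ ≠ ω₁, and suppose |ω₂| r₂ < ω₁ r₁ (the curtate case, arm ratio ρ = |ω₂/ω₁|·(r₂/r₁) < 1). Let (x(t), y(t)) = (r₁ cos(ω₁ t) + r₂ cos(ω₂ t), r₁ sin(ω₁ t) + r₂ sin(ω₂ t)) and T = 2π/|ω₂ − ω₁|. Then the turning number of a periodic arc is κ̆ = (1/(2π)) ∫₀ᵀ (ẋ(τ)ÿ(τ) − ẏ(τ)ẍ(τ)) / (ẋ(τ)² + ẏ(τ)²) dτ = ω₁/|ω₂ − ω₁|. (Equivalently, with χ = ω₁/ω₂: κ̆ = χ/(χ−1) for curtate hypotrochoids (χ<0) and peritrochoids (χ>1), and κ̆ = χ/(1−χ) for curtate epitrochoids (0<χ<1).) -/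

import Mathlib

open Real

private lemma trochoid_denom_pos (a b Δ : ℝ) (ha : 0 < a) (hb : |b| < a) (t : ℝ) :
    0 < a ^ 2 + b ^ 2 + 2 * a * b * Real.cos (Δ * t) := by
  have h4 : |b * Real.cos (Δ * t)| ≤ |b| := by
    rw [abs_mul]; exact mul_le_of_le_one_right (abs_nonneg b) (Real.abs_cos_le_one _)
  have h3 : -|b| ≤ b * Real.cos (Δ * t) := by
    have := neg_abs_le (b * Real.cos (Δ * t)); linarith
  nlinarith [mul_le_mul_of_nonneg_left h3 (le_of_lt ha), sq_abs b,
    mul_pos (sub_pos.2 hb) (sub_pos.2 hb)]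

private lemma trochoid_aux (a b Δ ω₁ : ℝ) (ha : 0 < a) (hb : |b| < a) (hΔ : Δ ≠ 0) :
    ∫ τ in (0:ℝ)..(2 * Real.pi / |Δ|),
      (a ^ 2 * ω₁ + b ^ 2 * (ω₁ + Δ) + a * b * (2 * ω₁ + Δ) * Real.cos (Δ * τ))
        / (a ^ 2 + b ^ 2 + 2 * a * b * Real.cos (Δ * τ))
      = ω₁ * (2 * Real.pi / |Δ|) := by
  have hv : ∀ t : ℝ, 0 < a + b * Real.cos (Δ * t) := by
    intro t
    nlinarith [neg_abs_le (b * Real.cos (Δ * t)), abs_mul b (Real.cos (Δ * t)),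
      Real.abs_cos_le_one (Δ * t), abs_nonneg b]
  set F : ℝ → ℝ := fun t =>
    (a ^ 2 * ω₁ + b ^ 2 * (ω₁ + Δ) + a * b * (2 * ω₁ + Δ) * Real.cos (Δ * t))
      / (a ^ 2 + b ^ 2 + 2 * a * b * Real.cos (Δ * t)) with hFdef
  set φ : ℝ → ℝ := fun s =>
    ω₁ * s + Real.arctan (b * Real.sin (Δ * s) / (a + b * Real.cos (Δ * s))) with hφdef
  have hφ : ∀ t : ℝ, HasDerivAt φ (F t) t := by
    intro t
    have hl : HasDerivAt (fun s : ℝ => Δ * s) Δ t := by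
      simpa using (hasDerivAt_id t).const_mul Δ
    have hs : HasDerivAt (fun s : ℝ => b * Real.sin (Δ * s)) (b * (Real.cos (Δ * t) * Δ)) t :=
      ((Real.hasDerivAt_sin (Δ * t)).comp t hl).const_mul b
    have hc : HasDerivAt (fun s : ℝ => a + b * Real.cos (Δ * s))
        (b * (-Real.sin (Δ * t) * Δ)) t :=
      (((Real.hasDerivAt_cos (Δ * t)).comp t hl).const_mul b).const_add a
    have hq := hs.div hc (ne_of_gt (hv t))
    have harc := (Real.hasDerivAt_arctan
      (b * Real.sin (Δ * t) / (a + b * Real.cos (Δ * t)))).comp t hq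
    have hlin : HasDerivAt (fun s : ℝ => ω₁ * s) ω₁ t := by
      simpa using (hasDerivAt_id t).const_mul ω₁
    have hsum := hlin.add harc
    refine hsum.congr_deriv (Eq.symm ?_)
    have h1 := hv t
    have h2 := trochoid_denom_pos a b Δ ha hb t
    have hpy : Real.sin (Δ * t) ^ 2 + Real.cos (Δ * t) ^ 2 = 1 :=
      Real.sin_sq_add_cos_sq (Δ * t)
    have hA : (1:ℝ) + (b * Real.sin (Δ * t) / (a + b * Real.cos (Δ * t))) ^ 2
        = (a ^ 2 + b ^ 2 + 2 * a * b * Real.cos (Δ * t)) / (a + b * Real.cos (Δ * t)) ^ 2 := by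
      field_simp
      linear_combination (b ^ 2) * hpy
    rw [hFdef]
    dsimp only
    rw [hA, one_div_div]
    field_simp [ne_of_gt h1, ne_of_gt h2]
    ring_nf
    simp only [Real.sin_sq]
    have h2' : a * b * Real.cos (Δ * t) * 2 + a ^ 2 + b ^ 2 ≠ 0 := by linarith
    linear_combination ω₁ * (mul_inv_cancel₀ h2')
  have hFc : Continuous F := by
    apply Continuous.div
    · fun_prop
    · fun_prop
    · exact fun t => ne_of_gt (trochoid_denom_pos a b Δ ha hb t)
  rw [intervalIntegral.integral_eq_sub_of_hasDerivAt (fun t _ => hφ t)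
    (hFc.intervalIntegrable _ _)]
  have habs : |Δ| ≠ 0 := abs_ne_zero.2 hΔ
  have hΔT : Real.sin (Δ * (2 * Real.pi / |Δ|)) = 0 ∧
      Real.cos (Δ * (2 * Real.pi / |Δ|)) = 1 := by
    rcases abs_cases Δ with ⟨h1, _⟩ | ⟨h1, _⟩
    · have : Δ * (2 * Real.pi / |Δ|) = 2 * Real.pi := by
        rw [h1]; field_simp
      rw [this]
      exact ⟨Real.sin_two_pi, Real.cos_two_pi⟩
    · have : Δ * (2 * Real.pi / |Δ|) = -(2 * Real.pi) := by
        rw [h1]; field_simp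
      rw [this, Real.sin_neg, Real.cos_neg]
      exact ⟨by rw [Real.sin_two_pi]; ring, Real.cos_two_pi⟩
  simp [hφdef, hΔT.1, hΔT.2]

theorem curtate_trochoid_turning_number
    (r₁ r₂ ω₁ ω₂ : ℝ) (hr₁ : 0 < r₁) (hr₂ : 0 < r₂)
    (hω₁ : 0 < ω₁) (hω₂ : ω₂ ≠ 0) (hne : ω₂ ≠ ω₁)
    (hcurt : |ω₂| * r₂ < ω₁ * r₁)
    (x y : ℝ → ℝ)
    (hx : ∀ t : ℝ, x t = r₁ * Real.cos (ω₁ * t) + r₂ * Real.cos (ω₂ * t))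
    (hy : ∀ t : ℝ, y t = r₁ * Real.sin (ω₁ * t) + r₂ * Real.sin (ω₂ * t))
    (T : ℝ) (hT : T = 2 * Real.pi / |ω₂ - ω₁|) :
    (1 / (2 * Real.pi)) *
        ∫ τ in (0:ℝ)..T,
          (deriv x τ * deriv (deriv y) τ - deriv y τ * deriv (deriv x) τ)
            / ((deriv x τ) ^ 2 + (deriv y τ) ^ 2)
      = ω₁ / |ω₂ - ω₁| := by
  have hΔ : ω₂ - ω₁ ≠ 0 := sub_ne_zero.2 hne
  set a := r₁ * ω₁ with ha'
  set b := r₂ * ω₂ with hb'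
  have ha : 0 < a := mul_pos hr₁ hω₁
  have hb : |b| < a := by
    rw [hb', abs_mul, abs_of_pos hr₂, ha']
    nlinarith [hcurt]
  -- derivative auxiliaries
  have hl1 : ∀ t : ℝ, HasDerivAt (fun s : ℝ => ω₁ * s) ω₁ t := fun t => by
    simpa using (hasDerivAt_id t).const_mul ω₁
  have hl2 : ∀ t : ℝ, HasDerivAt (fun s : ℝ => ω₂ * s) ω₂ t := fun t => by
    simpa using (hasDerivAt_id t).const_mul ω₂
  have hxe : x = fun t => r₁ * Real.cos (ω₁ * t) + r₂ * Real.cos (ω₂ * t) := funext hx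
  have hye : y = fun t => r₁ * Real.sin (ω₁ * t) + r₂ * Real.sin (ω₂ * t) := funext hy
  have hdx1 : ∀ t : ℝ, HasDerivAt (fun t => r₁ * Real.cos (ω₁ * t) + r₂ * Real.cos (ω₂ * t))
      (-(a * Real.sin (ω₁ * t)) - b * Real.sin (ω₂ * t)) t := by
    intro t
    have := (((Real.hasDerivAt_cos (ω₁ * t)).comp t (hl1 t)).const_mul r₁).add
      (((Real.hasDerivAt_cos (ω₂ * t)).comp t (hl2 t)).const_mul r₂)
    refine this.congr_deriv (Eq.symm ?_)
    rw [ha', hb']; ring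
  have hdy1 : ∀ t : ℝ, HasDerivAt (fun t => r₁ * Real.sin (ω₁ * t) + r₂ * Real.sin (ω₂ * t))
      (a * Real.cos (ω₁ * t) + b * Real.cos (ω₂ * t)) t := by
    intro t
    have := (((Real.hasDerivAt_sin (ω₁ * t)).comp t (hl1 t)).const_mul r₁).add
      (((Real.hasDerivAt_sin (ω₂ * t)).comp t (hl2 t)).const_mul r₂)
    refine this.congr_deriv (Eq.symm ?_)
    rw [ha', hb']; ring
  have hdx : deriv x = fun t => -(a * Real.sin (ω₁ * t)) - b * Real.sin (ω₂ * t) := by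
    funext t; rw [hxe]; exact (hdx1 t).deriv
  have hdy : deriv y = fun t => a * Real.cos (ω₁ * t) + b * Real.cos (ω₂ * t) := by
    funext t; rw [hye]; exact (hdy1 t).deriv
  have hddx1 : ∀ t : ℝ, HasDerivAt (fun t => -(a * Real.sin (ω₁ * t)) - b * Real.sin (ω₂ * t))
      (-(a * ω₁ * Real.cos (ω₁ * t)) - b * ω₂ * Real.cos (ω₂ * t)) t := by
    intro t
    have := ((((Real.hasDerivAt_sin (ω₁ * t)).comp t (hl1 t)).const_mul a).neg).sub
      (((Real.hasDerivAt_sin (ω₂ * t)).comp t (hl2 t)).const_mul b)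
    refine this.congr_deriv (Eq.symm ?_)
    ring
  have hddy1 : ∀ t : ℝ, HasDerivAt (fun t => a * Real.cos (ω₁ * t) + b * Real.cos (ω₂ * t))
      (-(a * ω₁ * Real.sin (ω₁ * t)) - b * ω₂ * Real.sin (ω₂ * t)) t := by
    intro t
    have := (((Real.hasDerivAt_cos (ω₁ * t)).comp t (hl1 t)).const_mul a).add
      (((Real.hasDerivAt_cos (ω₂ * t)).comp t (hl2 t)).const_mul b)
    refine this.congr_deriv (Eq.symm ?_)
    ring
  have hddx : deriv (deriv x) = fun t => -(a * ω₁ * Real.cos (ω₁ * t)) - b * ω₂ * Real.cos (ω₂ * t) := by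
    funext t; rw [hdx]; exact (hddx1 t).deriv
  have hddy : deriv (deriv y) = fun t => -(a * ω₁ * Real.sin (ω₁ * t)) - b * ω₂ * Real.sin (ω₂ * t) := by
    funext t; rw [hdy]; exact (hddy1 t).deriv
  have key : ∀ τ : ℝ,
      (deriv x τ * deriv (deriv y) τ - deriv y τ * deriv (deriv x) τ)
        / ((deriv x τ) ^ 2 + (deriv y τ) ^ 2)
      = (a ^ 2 * ω₁ + b ^ 2 * (ω₁ + (ω₂ - ω₁)) + a * b * (2 * ω₁ + (ω₂ - ω₁)) * Real.cos ((ω₂ - ω₁) * τ))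
        / (a ^ 2 + b ^ 2 + 2 * a * b * Real.cos ((ω₂ - ω₁) * τ)) := by
    intro τ
    rw [hddx, hddy, hdx, hdy]
    beta_reduce
    have hc : Real.cos ((ω₂ - ω₁) * τ)
        = Real.cos (ω₂ * τ) * Real.cos (ω₁ * τ) + Real.sin (ω₂ * τ) * Real.sin (ω₁ * τ) := by
      rw [show (ω₂ - ω₁) * τ = ω₂ * τ - ω₁ * τ by ring, Real.cos_sub]
    have hnum : (-(a * Real.sin (ω₁ * τ)) - b * Real.sin (ω₂ * τ))
            * (-(a * ω₁ * Real.sin (ω₁ * τ)) - b * ω₂ * Real.sin (ω₂ * τ))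
          - (a * Real.cos (ω₁ * τ) + b * Real.cos (ω₂ * τ))
            * (-(a * ω₁ * Real.cos (ω₁ * τ)) - b * ω₂ * Real.cos (ω₂ * τ))
        = a ^ 2 * ω₁ + b ^ 2 * (ω₁ + (ω₂ - ω₁))
          + a * b * (2 * ω₁ + (ω₂ - ω₁)) * Real.cos ((ω₂ - ω₁) * τ) := by
      rw [hc]
      linear_combination (a ^ 2 * ω₁) * Real.sin_sq_add_cos_sq (ω₁ * τ)
        + (b ^ 2 * ω₂) * Real.sin_sq_add_cos_sq (ω₂ * τ)
    have hden : (-(a * Real.sin (ω₁ * τ)) - b * Real.sin (ω₂ * τ)) ^ 2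
          + (a * Real.cos (ω₁ * τ) + b * Real.cos (ω₂ * τ)) ^ 2
        = a ^ 2 + b ^ 2 + 2 * a * b * Real.cos ((ω₂ - ω₁) * τ) := by
      rw [hc]
      linear_combination (a ^ 2) * Real.sin_sq_add_cos_sq (ω₁ * τ)
        + (b ^ 2) * Real.sin_sq_add_cos_sq (ω₂ * τ)
    rw [hnum, hden]
  have hint : (∫ τ in (0:ℝ)..T,
      (deriv x τ * deriv (deriv y) τ - deriv y τ * deriv (deriv x) τ)
        / ((deriv x τ) ^ 2 + (deriv y τ) ^ 2))
      = ∫ τ in (0:ℝ)..T,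
        (a ^ 2 * ω₁ + b ^ 2 * (ω₁ + (ω₂ - ω₁)) + a * b * (2 * ω₁ + (ω₂ - ω₁)) * Real.cos ((ω₂ - ω₁) * τ))
          / (a ^ 2 + b ^ 2 + 2 * a * b * Real.cos ((ω₂ - ω₁) * τ)) :=
    intervalIntegral.integral_congr fun τ _ => key τ
  rw [hint, hT, trochoid_aux a b (ω₂ - ω₁) ω₁ ha hb hΔ]
  have habs : |ω₂ - ω₁| ≠ 0 := abs_ne_zero.2 hΔ
  have hπ : Real.pi ≠ 0 := Real.pi_ne_zero
  field_simp
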